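/- Let C be a closed symmetric monoidal category and f : X → Y a trace-class morphism with classifier η : 𝟙 → X^∨ ⊗ Y. Then the dual morphism f^∨ : Y^∨ → X^∨ is trace-class, with classifier given by the composite 𝟙 → X^∨ ⊗ Y → X^∨ ⊗ Y^{∨∨} = (Y^∨)^∨ ⊗ X^∨ (using η and the canonical map Y → Y^{∨∨}). -/

import Mathlib

set_option linter.unusedSectionVars false

open CategoryTheory MonoidalCategory

variable {C : Type*} [Category C] [MonoidalCategory C] [SymmetricCategory C] [MonoidalClosed C]

/-- The dual `X^∨ = [X, 𝟙]` of an object of a closed symmetric monoidal category. -/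
noncomputable def dualObj (X : C) : C := (ihom X).obj (𝟙_ C)

/-- The evaluation `ev_X : X ⊗ X^∨ ⟶ 𝟙`. -/
noncomputable def evDual (X : C) : X ⊗ dualObj X ⟶ 𝟙_ C := (ihom.ev X).app (𝟙_ C)

/-- The composite `X ≅ X ⊗ 𝟙 ⟶ X ⊗ (X^∨ ⊗ Y) ≅ (X ⊗ X^∨) ⊗ Y ⟶ 𝟙 ⊗ Y ≅ Y`
determined by a classifier `η : 𝟙 ⟶ X^∨ ⊗ Y`. -/
noncomputable def traceComposite {X Y : C} (η : 𝟙_ C ⟶ dualObj X ⊗ Y) : X ⟶ Y :=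
  (ρ_ X).inv ≫ (X ◁ η) ≫ (α_ X (dualObj X) Y).inv ≫ (evDual X ▷ Y) ≫ (λ_ Y).hom

/-- A morphism is trace-class if it arises from some classifier `η : 𝟙 ⟶ X^∨ ⊗ Y`. -/
def IsTraceClass {X Y : C} (f : X ⟶ Y) : Prop :=
  ∃ η : 𝟙_ C ⟶ dualObj X ⊗ Y, f = traceComposite η

/-- The dual morphism `f^∨ : Y^∨ ⟶ X^∨`, induced by precomposition with `f`. -/
noncomputable def dualMap {X Y : C} (f : X ⟶ Y) : dualObj Y ⟶ dualObj X :=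
  (MonoidalClosed.pre f).app (𝟙_ C)

/-- The canonical double dual map `Y ⟶ Y^{∨∨}`. -/
noncomputable def doubleDual (Y : C) : Y ⟶ dualObj (dualObj Y) :=
  MonoidalClosed.curry ((β_ (dualObj Y) Y).hom ≫ evDual Y)

/-- If `f : X ⟶ Y` is trace-class with classifier `η : 𝟙 ⟶ X^∨ ⊗ Y`, then the dual
`f^∨ : Y^∨ ⟶ X^∨` is trace-class, with classifier the composite
`𝟙 ⟶ X^∨ ⊗ Y ⟶ X^∨ ⊗ Y^{∨∨} ≅ (Y^∨)^∨ ⊗ X^∨`. -/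


private lemma aux_exchange {A A' B B' : C} (eA : A ⊗ A' ⟶ 𝟙_ C) (eB : B ⊗ B' ⟶ 𝟙_ C)
    (η : 𝟙_ C ⟶ A' ⊗ B) :
    (((ρ_ A).inv ≫ (A ◁ η) ≫ (α_ A A' B).inv ≫ (eA ▷ B) ≫ (λ_ B).hom) ▷ B') ≫ eB
    = A ◁ (ρ_ B').inv ≫ A ◁ B' ◁ η ≫ A ◁ B' ◁ (β_ A' B).hom ≫ A ◁ (α_ B' B A').inv ≫
        A ◁ (β_ B' B).hom ▷ A' ≫ A ◁ eB ▷ A' ≫ A ◁ (λ_ A').hom ≫ eA := by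
  open BraidedCategory in
  have h1 : A' ◁ eB ≫ (ρ_ A').hom = (β_ A' (B ⊗ B')).hom ≫ eB ▷ A' ≫ (λ_ A').hom := by
    rw [← braiding_leftUnitor, ← braiding_naturality_right_assoc]
  open BraidedCategory in
  have slide : B' ◁ (η ≫ (β_ A' B).hom) =
      (β_ B' (𝟙_ C)).hom ≫ ((η ≫ (β_ A' B).hom) ▷ B') ≫ (β_ B' (B ⊗ A')).inv := by
    rw [← braiding_naturality_right_assoc, Iso.hom_inv_id, Category.comp_id]
  open BraidedCategory in
  have hmid :
      A ◁ ((λ_ B').inv ≫ (η ▷ B') ≫ (α_ A' B B').hom ≫ (A' ◁ eB) ≫ (ρ_ A').hom) ≫ eA =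
      A ◁ (ρ_ B').inv ≫
        A ◁ B' ◁ η ≫
          A ◁ B' ◁ (β_ A' B).hom ≫ A ◁ (α_ B' B A').inv ≫ A ◁ (β_ B' B).hom ▷ A' ≫
            A ◁ eB ▷ A' ≫ A ◁ (λ_ A').hom ≫ eA := by
    rw [h1]
    calc
      _ = A ◁ ((λ_ B').inv ≫ (η ▷ B') ≫ (α_ A' B B').hom ≫
            ((α_ A' B B').inv ≫ (β_ A' B).hom ▷ B' ≫ (α_ B A' B').hom ≫
              B ◁ (β_ A' B').hom ≫ (α_ B B' A').inv) ≫ eB ▷ A' ≫ (λ_ A').hom) ≫ eA := by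
        rw [braiding_tensor_right_hom]
      _ = A ◁ ((ρ_ B').inv ≫ ((ρ_ B').hom ≫ (λ_ B').inv) ≫ ((η ≫ (β_ A' B).hom) ▷ B') ≫
            ((α_ B A' B').hom ≫ B ◁ (β_ A' B').hom ≫ (α_ B B' A').inv ≫
              (β_ B' B).inv ▷ A' ≫ (α_ B' B A').hom) ≫ (α_ B' B A').inv ≫
            (β_ B' B).hom ▷ A' ≫ eB ▷ A' ≫ (λ_ A').hom) ≫ eA := by
        simp only [Category.assoc, Iso.hom_inv_id_assoc, inv_hom_whiskerRight_assoc]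
        monoidal
      _ = A ◁ ((ρ_ B').inv ≫ ((β_ B' (𝟙_ C)).hom ≫ ((η ≫ (β_ A' B).hom) ▷ B') ≫
            (β_ B' (B ⊗ A')).inv) ≫ (α_ B' B A').inv ≫
            (β_ B' B).hom ▷ A' ≫ eB ▷ A' ≫ (λ_ A').hom) ≫ eA := by
        rw [braiding_tensor_right_inv, ← SymmetricCategory.braiding_swap_eq_inv_braiding B' A',
          show (β_ B' (𝟙_ C)).hom = (ρ_ B').hom ≫ (λ_ B').inv from by
            rw [← braiding_leftUnitor B', Category.assoc, Iso.hom_inv_id, Category.comp_id]]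
        simp only [Category.assoc]
      _ = _ := by
        rw [← slide]
        simp only [MonoidalCategory.whiskerLeft_comp, Category.assoc]
  calc
    _ = A ◁ (λ_ B').inv ≫ A ◁ (η ▷ B') ≫ A ◁ (α_ A' B B').hom ≫ (α_ A A' (B ⊗ B')).inv
        ≫ (eA ▷ (B ⊗ B')) ≫ (λ_ (B ⊗ B')).hom ≫ eB := by monoidal
    _ = A ◁ (λ_ B').inv ≫ A ◁ (η ▷ B') ≫ A ◁ (α_ A' B B').hom ≫ (α_ A A' (B ⊗ B')).inv
        ≫ ((A ⊗ A') ◁ eB) ≫ (eA ▷ 𝟙_ C) ≫ (λ_ (𝟙_ C)).hom := by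
      rw [whisker_exchange_assoc]; simp
    _ = A ◁ ((λ_ B').inv ≫ (η ▷ B') ≫ (α_ A' B B').hom ≫ (A' ◁ eB) ≫ (ρ_ A').hom) ≫ eA := by
      monoidal
    _ = _ := hmid

private lemma aux_main {A A' B B' B'' : C} (eA : A ⊗ A' ⟶ 𝟙_ C) (eB : B ⊗ B' ⟶ 𝟙_ C)
    (e' : B' ⊗ B'' ⟶ 𝟙_ C) (d : B ⟶ B'') (η : 𝟙_ C ⟶ A' ⊗ B)
    (h : (B' ◁ d) ≫ e' = (β_ B' B).hom ≫ eB) :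
    (((ρ_ A).inv ≫ (A ◁ η) ≫ (α_ A A' B).inv ≫ (eA ▷ B) ≫ (λ_ B).hom) ▷ B') ≫ eB
    = (A ◁ ((ρ_ B').inv ≫ (B' ◁ (η ≫ (A' ◁ d) ≫ (β_ A' B'').hom)) ≫ (α_ B' B'' A').inv
        ≫ (e' ▷ A') ≫ (λ_ A').hom)) ≫ eA := by
  open BraidedCategory in
  rw [braiding_naturality_right]
  simp only [MonoidalCategory.whiskerLeft_comp, comp_whiskerRight, Category.assoc,
    associator_inv_naturality_middle_assoc]
  rw [← MonoidalCategory.whiskerLeft_comp_assoc A ((B' ◁ d) ▷ A'), ← comp_whiskerRight, h]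
  simp only [comp_whiskerRight, MonoidalCategory.whiskerLeft_comp, Category.assoc]
  simpa only [comp_whiskerRight, Category.assoc] using aux_exchange eA eB η

theorem isTraceClass_dualMap {X Y : C} (f : X ⟶ Y) (η : 𝟙_ C ⟶ dualObj X ⊗ Y)
    (hf : f = traceComposite η) :
    IsTraceClass (dualMap f) ∧
      dualMap f = traceComposite
        (η ≫ (dualObj X ◁ doubleDual Y) ≫ (β_ (dualObj X) (dualObj (dualObj Y))).hom) := by
  have key : dualMap f = traceComposite
      (η ≫ (dualObj X ◁ doubleDual Y) ≫ (β_ (dualObj X) (dualObj (dualObj Y))).hom) := by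
    apply MonoidalClosed.uncurry_injective
    rw [dualMap]; erw [MonoidalClosed.uncurry_pre, MonoidalClosed.uncurry_eq]; rw [hf]
    have h : (dualObj Y ◁ doubleDual Y) ≫ evDual (dualObj Y) =
        (β_ (dualObj Y) Y).hom ≫ evDual Y := by
      have := MonoidalClosed.uncurry_curry ((β_ (dualObj Y) Y).hom ≫ evDual Y)
      rw [MonoidalClosed.uncurry_eq] at this
      exact this
    have := aux_main (evDual X) (evDual Y) (evDual (dualObj Y)) (doubleDual Y) η h
    simp only [traceComposite, evDual, dualObj] at this ⊢
    simpa [Category.assoc] using this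
  exact ⟨⟨_, key⟩, key⟩
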